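/- Let p : ℤ → ℝ satisfy: p(k) ≥ 0 for all k, p(k) = 0 for |k| > R where R > 1 is an integer, p(R) > 0, and p(k) ≥ p(−k) for every k ≥ 1 with strict inequality for some k. Let ν̄ be an invariant probability measure for the generator L of the ASEP on ℤ with a blockage at the origin such that ⟨ν̄, C_{−1,1}⟩ = 0, and let ν* be a Cesàro weak limit of ν̄ under translation (ν* = lim_k (1/n_k) Σ_{i=1}^{n_k} τ_i ν̄ weakly, for some n_k → ∞) such that ⟨ν*, η_x⟩ = 0 for every x ∈ ℤ. Then ⟨ν̄, η_x⟩ = 0 for every x > 0. -/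

import Mathlib

set_option maxHeartbeats 1000000
set_option linter.unusedSectionVars false
set_option linter.unusedVariables false


open MeasureTheory Filter
open scoped NNReal

/-- A configuration of the exclusion process: for each site `x : ℤ`,
whether the site is occupied. -/
abbrev Config : Type := ℤ → Bool

/-- The occupation number `η(x) ∈ {0,1}` as a real number. -/
noncomputable def val (η : Config) (x : ℤ) : ℝ := if η x then 1 else 0

/-- The configuration `η^{x,y}` obtained from `η` by exchanging the values
at sites `x` and `y`. -/
def swapConf (η : Config) (x y : ℤ) : Config := fun z =>
  if z = x then η y else if z = y then η x else η z

/-- A local (cylinder) function: it depends on only finitely many coordinates. -/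
def IsLocal (f : Config → ℝ) : Prop :=
  ∃ s : Finset ℤ, ∀ η ζ : Config, (∀ x ∈ s, η x = ζ x) → f η = f ζ

/-- The generator of the ASEP on `ℤ` with a blockage at the origin:
`L f (η) = Σ_{x,y ≠ 0} p (y-x) η(x) (1-η(y)) (f(η^{x,y}) - f(η))`. -/
noncomputable def gen (p : ℤ → ℝ) (f : Config → ℝ) (η : Config) : ℝ :=
  ∑' q : ℤ × ℤ,
    if q.1 ≠ 0 ∧ q.2 ≠ 0 then
      p (q.2 - q.1) * val η q.1 * (1 - val η q.2) * (f (swapConf η q.1 q.2) - f η)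
    else 0

/-- The current across the bond `(i,j)`:
`C_{i,j}(η) = Σ_{x ≤ i, y ≥ j, x ≠ 0, y ≠ 0}
  [p(y-x) η(x)(1-η(y)) - p(x-y) η(y)(1-η(x))]`. -/
noncomputable def current (p : ℤ → ℝ) (i j : ℤ) (η : Config) : ℝ :=
  ∑' q : ℤ × ℤ,
    if q.1 ≤ i ∧ j ≤ q.2 ∧ q.1 ≠ 0 ∧ q.2 ≠ 0 then
      p (q.2 - q.1) * val η q.1 * (1 - val η q.2)
        - p (q.1 - q.2) * val η q.2 * (1 - val η q.1)
    else 0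

/-- A measure `ν` is invariant for the generator `L` if `∫ L f dν = 0`
for every local function `f`. -/
def IsInvariantMeasure (p : ℤ → ℝ) (ν : Measure Config) : Prop :=
  ∀ f : Config → ℝ, IsLocal f → ∫ η, gen p f η ∂ν = 0

/-- The translation `τ_i` on configurations: `(τ_i η)(j) = η (j + i)`. -/
def transl (i : ℤ) (η : Config) : Config := fun j => η (j + i)

/-- The translation `τ_i` on measures (pushforward). -/
noncomputable def translMeasure (i : ℤ) (ν : Measure Config) : Measure Config :=
  Measure.map (transl i) ν

/-- `ν'` is a Cesàro weak limit of `ν` under translation: for some sequence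
`n_k → ∞`, the probability measures `(1/n_k) Σ_{i=1}^{n_k} τ_i ν` converge weakly
to `ν'`, i.e. the integrals of every (bounded) continuous function converge.  -/
def IsCesaroLimit (ν ν' : Measure Config) : Prop :=
  ∃ n : ℕ → ℕ, Tendsto n atTop atTop ∧
    ∀ f : Config → ℝ, Continuous f →
      Tendsto (fun k => (n k : ℝ)⁻¹ * ∑ i ∈ Finset.Icc 1 (n k),
          ∫ η, f η ∂(translMeasure (i : ℤ) ν)) atTop
        (nhds (∫ η, f η ∂ν'))


section basics

lemma val_nonneg (η : Config) (x : ℤ) : 0 ≤ val η x := by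
  unfold val; split <;> norm_num

lemma val_le_one (η : Config) (x : ℤ) : val η x ≤ 1 := by
  unfold val; split <;> norm_num

lemma measurable_val (x : ℤ) : Measurable (fun η : Config => val η x) := by
  unfold val
  exact (measurable_from_top (f := fun b : Bool => if b then (1:ℝ) else 0)).comp
    (measurable_pi_apply x)

lemma continuous_val (x : ℤ) : Continuous (fun η : Config => val η x) := by
  unfold val
  exact Continuous.comp
    (continuous_of_discreteTopology (f := fun b : Bool => if b then (1:ℝ) else 0))
    (continuous_apply x)

lemma val_swap_same (η : Config) (u v : ℤ) : val (swapConf η u u) v = val η v := by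
  unfold val swapConf
  split_ifs with h h' <;> simp_all

lemma val_swap_left (η : Config) (u v : ℤ) : val (swapConf η u v) u = val η v := by
  simp [val, swapConf]

lemma val_swap_right (η : Config) (u v : ℤ) (h : v ≠ u) :
    val (swapConf η u v) v = val η u := by
  simp [val, swapConf, h]

lemma val_swap_other (η : Config) (u v z : ℤ) (h1 : z ≠ u) (h2 : z ≠ v) :
    val (swapConf η u v) z = val η z := by
  simp [val, swapConf, h1, h2]

-- boolean identities
lemma val_bool1 (η : Config) (x y : ℤ) :
    val η x * (1 - val η y) * (val η x - val η y) = val η x * (1 - val η y) := by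
  unfold val; split_ifs <;> norm_num

lemma val_bool2 (η : Config) (x y : ℤ) :
    val η x * (1 - val η y) * (val η y - val η x) = -(val η x * (1 - val η y)) := by
  unfold val; split_ifs <;> norm_num

variable (ν : Measure Config) [IsProbabilityMeasure ν]

lemma integrable_bdd {f : Config → ℝ} (hf : Measurable f) (C : ℝ) (h : ∀ η, |f η| ≤ C) :
    Integrable f ν :=
  Integrable.mono' (integrable_const C) hf.aestronglyMeasurable (Eventually.of_forall h)

lemma integrable_val (x : ℤ) : Integrable (fun η => val η x) ν := by
  refine integrable_bdd ν (measurable_val x) 1 fun η => ?_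
  rw [abs_of_nonneg (val_nonneg η x)]; exact val_le_one η x

lemma integrable_ee (x y : ℤ) : Integrable (fun η => val η x * (1 - val η y)) ν := by
  refine integrable_bdd ν ((measurable_val x).mul (measurable_const.sub (measurable_val y))) 1
    fun η => ?_
  have h1 := val_nonneg η x; have h2 := val_le_one η x
  have h3 := val_nonneg η y; have h4 := val_le_one η y
  rw [abs_of_nonneg (by nlinarith)]; nlinarith

noncomputable def rho (x : ℤ) : ℝ := ∫ η, val η x ∂ν
noncomputable def EE (x y : ℤ) : ℝ := ∫ η, val η x * (1 - val η y) ∂ν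

lemma EE_nonneg (x y : ℤ) : 0 ≤ EE ν x y := by
  refine integral_nonneg fun η => mul_nonneg (val_nonneg η x) ?_
  have h4 := val_le_one η y; linarith

lemma EE_le_rho (x y : ℤ) : EE ν x y ≤ rho ν x := by
  refine integral_mono (integrable_ee ν x y) (integrable_val ν x) fun η => ?_
  have h1 := val_nonneg η x; have h3 := val_nonneg η y
  nlinarith

lemma rho_sub_le_EE (x y : ℤ) : rho ν x - rho ν y ≤ EE ν x y := by
  rw [show rho ν x - rho ν y = ∫ η, (val η x - val η y) ∂ν from
    (integral_sub (integrable_val ν x) (integrable_val ν y)).symm]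
  refine integral_mono (Integrable.sub (integrable_val ν x) (integrable_val ν y))
    (integrable_ee ν x y) fun η => ?_
  have h1 := val_nonneg η x; have h2 := val_le_one η x
  have h3 := val_nonneg η y; have h4 := val_le_one η y
  unfold val at *; split_ifs <;> norm_num

lemma EE_sub_EE (x y : ℤ) : EE ν x y - EE ν y x = rho ν x - rho ν y := by
  rw [show EE ν x y - EE ν y x = ∫ η, (val η x * (1 - val η y) - val η y * (1 - val η x)) ∂ν from
    (integral_sub (integrable_ee ν x y) (integrable_ee ν y x)).symm,
    show rho ν x - rho ν y = ∫ η, (val η x - val η y) ∂ν from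
    (integral_sub (integrable_val ν x) (integrable_val ν y)).symm]
  exact integral_congr_ae (Eventually.of_forall fun η => by ring)

lemma rho_nonneg (x : ℤ) : 0 ≤ rho ν x := integral_nonneg fun η => val_nonneg η x

lemma rho_le_one (x : ℤ) : rho ν x ≤ 1 := by
  have := integral_mono (integrable_val ν x) (integrable_const 1) (fun η => val_le_one η x)
  simpa [rho] using this

end basics

section cur
variable (p : ℤ → ℝ) (R : ℤ) (hR : 0 < R) (hrange : ∀ k : ℤ, R < |k| → p k = 0)
include hR hrange

lemma current_eq_sum (i j : ℤ) (S : Finset (ℤ × ℤ))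
    (hS : ∀ q : ℤ × ℤ, j - R ≤ q.1 → q.1 ≤ i → j ≤ q.2 → q.2 ≤ i + R → q ∈ S) (η : Config) :
    current p i j η = ∑ q ∈ S,
      (if q.1 ≤ i ∧ j ≤ q.2 ∧ q.1 ≠ 0 ∧ q.2 ≠ 0 then
        p (q.2 - q.1) * val η q.1 * (1 - val η q.2)
          - p (q.1 - q.2) * val η q.2 * (1 - val η q.1)
      else 0) := by
  refine tsum_eq_sum ?_
  intro q hq
  split_ifs with h
  · obtain ⟨h1, h2, _, _⟩ := h
    have hk : R < q.2 - q.1 := by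
      by_contra hk
      push_neg at hk
      exact hq (hS q (by omega) h1 h2 (by omega))
    rw [hrange _ (by rw [abs_of_nonneg (by omega : (0:ℤ) ≤ q.2 - q.1)]; omega),
      hrange _ (by rw [abs_of_nonpos (by omega : q.1 - q.2 ≤ (0:ℤ))]; omega)]
    ring
  · rfl

variable (ν : Measure Config) [IsProbabilityMeasure ν]

omit hR hrange in
lemma integrable_curterm (q : ℤ × ℤ) (i j : ℤ) :
    Integrable (fun η => if q.1 ≤ i ∧ j ≤ q.2 ∧ q.1 ≠ 0 ∧ q.2 ≠ 0 then
        p (q.2 - q.1) * val η q.1 * (1 - val η q.2)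
          - p (q.1 - q.2) * val η q.2 * (1 - val η q.1)
      else 0) ν := by
  split_ifs with h
  · have : (fun η => p (q.2 - q.1) * val η q.1 * (1 - val η q.2)
        - p (q.1 - q.2) * val η q.2 * (1 - val η q.1))
        = fun η => p (q.2 - q.1) * (val η q.1 * (1 - val η q.2))
          - p (q.1 - q.2) * (val η q.2 * (1 - val η q.1)) := funext fun η => by ring
    rw [this]
    exact Integrable.sub ((integrable_ee ν q.1 q.2).const_mul _)
      ((integrable_ee ν q.2 q.1).const_mul _)
  · exact integrable_const 0

omit hR hrange in
lemma integral_curterm (q : ℤ × ℤ) (i j : ℤ) :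
    ∫ η, (if q.1 ≤ i ∧ j ≤ q.2 ∧ q.1 ≠ 0 ∧ q.2 ≠ 0 then
        p (q.2 - q.1) * val η q.1 * (1 - val η q.2)
          - p (q.1 - q.2) * val η q.2 * (1 - val η q.1)
      else 0) ∂ν
    = (if q.1 ≤ i ∧ j ≤ q.2 ∧ q.1 ≠ 0 ∧ q.2 ≠ 0 then
        p (q.2 - q.1) * EE ν q.1 q.2 - p (q.1 - q.2) * EE ν q.2 q.1 else 0) := by
  split_ifs with h
  · have : (fun η => p (q.2 - q.1) * val η q.1 * (1 - val η q.2)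
        - p (q.1 - q.2) * val η q.2 * (1 - val η q.1))
        = fun η => p (q.2 - q.1) * (val η q.1 * (1 - val η q.2))
          - p (q.1 - q.2) * (val η q.2 * (1 - val η q.1)) := funext fun η => by ring
    rw [this, integral_sub ((integrable_ee ν q.1 q.2).const_mul _)
      ((integrable_ee ν q.2 q.1).const_mul _), integral_const_mul, integral_const_mul]
    rfl
  · simp

lemma integrable_current (i j : ℤ) (S : Finset (ℤ × ℤ))
    (hS : ∀ q : ℤ × ℤ, j - R ≤ q.1 → q.1 ≤ i → j ≤ q.2 → q.2 ≤ i + R → q ∈ S) :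
    Integrable (fun η => current p i j η) ν := by
  have h1 : (fun η => current p i j η) = fun η => ∑ q ∈ S,
      (if q.1 ≤ i ∧ j ≤ q.2 ∧ q.1 ≠ 0 ∧ q.2 ≠ 0 then
        p (q.2 - q.1) * val η q.1 * (1 - val η q.2)
          - p (q.1 - q.2) * val η q.2 * (1 - val η q.1)
      else 0) := funext (current_eq_sum p R hR hrange i j S hS)
  rw [h1]
  exact integrable_finset_sum S fun q _ => integrable_curterm p ν q i j

lemma integral_current (i j : ℤ) (S : Finset (ℤ × ℤ))
    (hS : ∀ q : ℤ × ℤ, j - R ≤ q.1 → q.1 ≤ i → j ≤ q.2 → q.2 ≤ i + R → q ∈ S) :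
    ∫ η, current p i j η ∂ν = ∑ q ∈ S,
      (if q.1 ≤ i ∧ j ≤ q.2 ∧ q.1 ≠ 0 ∧ q.2 ≠ 0 then
        p (q.2 - q.1) * EE ν q.1 q.2 - p (q.1 - q.2) * EE ν q.2 q.1 else 0) := by
  have h1 : (fun η => current p i j η) = fun η => ∑ q ∈ S,
      (if q.1 ≤ i ∧ j ≤ q.2 ∧ q.1 ≠ 0 ∧ q.2 ≠ 0 then
        p (q.2 - q.1) * val η q.1 * (1 - val η q.2)
          - p (q.1 - q.2) * val η q.2 * (1 - val η q.1)
      else 0) := funext (current_eq_sum p R hR hrange i j S hS)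
  rw [h1, integral_finset_sum S fun q _ => integrable_curterm p ν q i j]
  exact Finset.sum_congr rfl fun q _ => integral_curterm p ν q i j

end cur

section step
variable (p : ℤ → ℝ) (R : ℤ)

lemma gen_eq_sum (hR : 0 < R) (hrange : ∀ k : ℤ, R < |k| → p k = 0) (m : ℤ)
    (S : Finset (ℤ × ℤ))
    (hS : ∀ q : ℤ × ℤ, m - R ≤ q.1 → q.1 ≤ m + R → m - R ≤ q.2 → q.2 ≤ m + R → q ∈ S)
    (η : Config) :
    gen p (fun ζ => val ζ m) η = ∑ q ∈ S,
      (if q.1 ≠ 0 ∧ q.2 ≠ 0 then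
        p (q.2 - q.1) * val η q.1 * (1 - val η q.2) * (val (swapConf η q.1 q.2) m - val η m)
      else 0) := by
  refine tsum_eq_sum ?_
  intro q hq
  split_ifs with h
  · by_cases hm : q.1 = m ∨ q.2 = m
    · have hk : R < |q.2 - q.1| := by
        by_contra hk
        push_neg at hk
        rcases hm with hm | hm <;>
          exact hq (hS q (by rw [abs_le] at hk; omega) (by rw [abs_le] at hk; omega)
            (by rw [abs_le] at hk; omega) (by rw [abs_le] at hk; omega))
      rw [hrange _ hk]
      ring
    · push_neg at hm
      simp only [val_swap_other η q.1 q.2 m (Ne.symm hm.1) (Ne.symm hm.2)]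
      ring
  · rfl

lemma current_step (hR : 0 < R) (hrange : ∀ k : ℤ, R < |k| → p k = 0) (m : ℤ) (hm : m ≠ 0)
    (η : Config) :
    current p (m-1) m η = current p m (m+1) η + gen p (fun ζ => val ζ m) η := by
  set S : Finset (ℤ × ℤ) := Finset.Icc (m-R) (m+R) ×ˢ Finset.Icc (m-R) (m+R) with hSdef
  have hmem : ∀ q : ℤ × ℤ, m - R ≤ q.1 → q.1 ≤ m + R → m - R ≤ q.2 → q.2 ≤ m + R → q ∈ S := by
    intro q h1 h2 h3 h4
    simp only [hSdef, Finset.mem_product, Finset.mem_Icc]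
    omega
  rw [current_eq_sum p R hR hrange (m-1) m S (fun q h1 h2 h3 h4 => hmem q (by omega) (by omega) (by omega) (by omega)) η,
    current_eq_sum p R hR hrange m (m+1) S (fun q h1 h2 h3 h4 => hmem q (by omega) (by omega) (by omega) (by omega)) η,
    gen_eq_sum p R hR hrange m S hmem η]
  rw [← sub_eq_zero, ← Finset.sum_add_distrib, ← Finset.sum_sub_distrib]
  have gmem : ∀ (q : ℤ × ℤ), q ∈ S → (q.2, q.1) ∈ S := by
    intro q hq
    simp only [hSdef, Finset.mem_product, Finset.mem_Icc] at hq ⊢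
    omega
  refine Finset.sum_involution (fun q _ => (q.2, q.1)) ?_ ?_ gmem (fun q hq => rfl)
  · -- key pointwise identity
    intro q hq
    obtain ⟨u, v⟩ := q
    simp only []
    by_cases huv : u = v
    · subst huv
      rw [val_swap_same]
      split_ifs <;> first | omega | ring
    · by_cases hum : u = m
      · subst hum
        have e1 : val (swapConf η u v) u = val η v := val_swap_left η u v
        have e2 : val (swapConf η v u) u = val η v := val_swap_right η v u huv
        rw [e1, e2]
        cases hb2 : η v <;> cases hb3 : η u <;>
          simp only [val, hb2, hb3, if_true, if_false, Bool.false_eq_true] <;>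
          split_ifs <;> first | omega | ring
      · by_cases hvm : v = m
        · subst hvm
          have e1 : val (swapConf η u v) v = val η u :=
            val_swap_right η u v (fun h => huv h.symm)
          have e2 : val (swapConf η v u) v = val η u := val_swap_left η v u
          rw [e1, e2]
          cases hb2 : η u <;> cases hb3 : η v <;>
            simp only [val, hb2, hb3, if_true, if_false, Bool.false_eq_true] <;>
            split_ifs <;> first | omega | ring
        · rw [val_swap_other η u v m (Ne.symm hum) (Ne.symm hvm),
            val_swap_other η v u m (Ne.symm hvm) (Ne.symm hum)]
          split_ifs <;> first | omega | ring
  · intro q hq hf hcontra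
    apply hf
    obtain ⟨u, v⟩ := q
    have h12 : v = u := (Prod.ext_iff.mp hcontra).1
    subst h12
    simp only []
    rw [val_swap_same]
    split_ifs <;> first | omega | ring

end step

section bond
variable (p : ℤ → ℝ) (R : ℤ) (ν : Measure Config) [IsProbabilityMeasure ν]

lemma isLocal_val (m : ℤ) : IsLocal (fun ζ => val ζ m) :=
  ⟨{m}, fun η ζ h => by simp [val, h m (Finset.mem_singleton_self m)]⟩

lemma measurable_swapval (u v m : ℤ) :
    Measurable (fun η : Config => val (swapConf η u v) m) := by
  have h : Measurable (fun η : Config => swapConf η u v) := by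
    refine measurable_pi_lambda _ fun z => ?_
    unfold swapConf
    split_ifs
    · exact measurable_pi_apply v
    · exact measurable_pi_apply u
    · exact measurable_pi_apply z
  exact (measurable_val m).comp h

lemma integrable_genterm (q : ℤ × ℤ) (m : ℤ) :
    Integrable (fun η => if q.1 ≠ 0 ∧ q.2 ≠ 0 then
      p (q.2 - q.1) * val η q.1 * (1 - val η q.2) * (val (swapConf η q.1 q.2) m - val η m)
      else 0) ν := by
  split_ifs with h
  · refine integrable_bdd ν ?_ (|p (q.2 - q.1)| * 2) fun η => ?_
    · exact ((((measurable_const).mul (measurable_val q.1)).mul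
        (measurable_const.sub (measurable_val q.2))).mul
        ((measurable_swapval q.1 q.2 m).sub (measurable_val m)))
    · have b1 := val_nonneg η q.1; have b2 := val_le_one η q.1
      have b3 := val_nonneg η q.2; have b4 := val_le_one η q.2
      have b5 := val_nonneg (swapConf η q.1 q.2) m; have b6 := val_le_one (swapConf η q.1 q.2) m
      have b7 := val_nonneg η m; have b8 := val_le_one η m
      have c1 : |val η q.1| ≤ 1 := by rw [abs_of_nonneg b1]; exact b2
      have c2 : |1 - val η q.2| ≤ 1 := by rw [abs_of_nonneg (by linarith)]; linarith
      have c3 : |val (swapConf η q.1 q.2) m - val η m| ≤ 2 := by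
        rw [abs_le]; constructor <;> linarith
      calc |p (q.2 - q.1) * val η q.1 * (1 - val η q.2) *
          (val (swapConf η q.1 q.2) m - val η m)|
          = |p (q.2 - q.1)| * |val η q.1| * |1 - val η q.2| *
            |val (swapConf η q.1 q.2) m - val η m| := by rw [abs_mul, abs_mul, abs_mul]
        _ ≤ |p (q.2 - q.1)| * 1 * 1 * 2 := by
            gcongr <;> exact abs_nonneg _
        _ = |p (q.2 - q.1)| * 2 := by ring
  · exact integrable_const 0

lemma integrable_gen (hR : 0 < R) (hrange : ∀ k : ℤ, R < |k| → p k = 0) (m : ℤ) : Integrable (fun η => gen p (fun ζ => val ζ m) η) ν := by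
  have h1 : (fun η => gen p (fun ζ => val ζ m) η) = fun η =>
      ∑ q ∈ Finset.Icc (m-R) (m+R) ×ˢ Finset.Icc (m-R) (m+R),
      (if q.1 ≠ 0 ∧ q.2 ≠ 0 then
        p (q.2 - q.1) * val η q.1 * (1 - val η q.2) * (val (swapConf η q.1 q.2) m - val η m)
      else 0) := by
    refine funext fun η => gen_eq_sum p R hR hrange m _ ?_ η
    intro q h1 h2 h3 h4
    simp only [Finset.mem_product, Finset.mem_Icc]
    omega
  rw [h1]
  exact integrable_finset_sum _ fun q _ => integrable_genterm p ν q m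

lemma current_m1_1 (η : Config) : current p (-1) 1 η = current p 0 1 η := by
  refine tsum_congr fun q => ?_
  refine if_congr ?_ rfl rfl
  constructor <;> (rintro ⟨h1, h2, h3, h4⟩; exact ⟨by omega, h2, h3, h4⟩)

lemma bond_zero (hR : 0 < R) (hrange : ∀ k : ℤ, R < |k| → p k = 0)
    (hinv : IsInvariantMeasure p ν)
    (hcur : ∫ η, current p (-1) 1 η ∂ν = 0) :
    ∀ m : ℤ, 0 ≤ m → ∫ η, current p m (m+1) η ∂ν = 0 := by
  refine Int.le_induction ?_ ?_
  ·
    rw [show (0:ℤ) + 1 = 1 from rfl]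
    rw [show (fun η => current p 0 1 η) = fun η => current p (-1) 1 η from
      funext fun η => (current_m1_1 p η).symm]
    exact hcur
  · intro m hm ih
    have hstep : (fun η => current p m (m+1) η) = fun η =>
        current p (m+1) (m+1+1) η + gen p (fun ζ => val ζ (m+1)) η := by
      refine funext fun η => ?_
      have := current_step p R hR hrange (m+1) (by omega) η
      rw [show m+1-1 = m by omega] at this
      exact this
    have hint1 : Integrable (fun η => current p (m+1) (m+1+1) η) ν :=
      integrable_current p R hR hrange ν (m+1) (m+1+1)
        (Finset.Icc (m+1+1-R) (m+1) ×ˢ Finset.Icc (m+1+1) (m+1+R))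
        (fun q h1 h2 h3 h4 => by simp only [Finset.mem_product, Finset.mem_Icc]; omega)
    have heq : ∫ η, current p m (m+1) η ∂ν
        = ∫ η, current p (m+1) (m+1+1) η ∂ν + ∫ η, gen p (fun ζ => val ζ (m+1)) η ∂ν := by
      rw [hstep]
      exact integral_add hint1 (integrable_gen p R ν hR hrange (m+1))
    have hg : ∫ η, gen p (fun ζ => val ζ (m+1)) η ∂ν = 0 := hinv _ (isLocal_val (m+1))
    rw [ih, hg, add_zero] at heq
    exact heq.symm
end bond

section ces
variable (ν : Measure Config) [IsProbabilityMeasure ν]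

lemma measurable_transl (i : ℤ) : Measurable (transl i) :=
  measurable_pi_lambda _ fun j => measurable_pi_apply (j + i)

lemma integral_transl (i x : ℤ) : ∫ η, val η x ∂(translMeasure i ν) = rho ν (x + i) := by
  unfold translMeasure
  rw [integral_map (measurable_transl i).aemeasurable (measurable_val x).aestronglyMeasurable]
  rfl

lemma sum_cast_rho (N : ℕ) :
    ∑ y ∈ Finset.Icc (1:ℤ) (N:ℤ), rho ν y = ∑ i ∈ Finset.Icc (1:ℕ) N, rho ν (i:ℤ) := by
  refine Finset.sum_nbij' (fun y => y.toNat) (fun i => (i:ℤ)) ?_ ?_ ?_ ?_ ?_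
  · intro y hy
    simp only [Finset.mem_Icc] at hy ⊢
    omega
  · intro i hi
    simp only [Finset.mem_Icc] at hi ⊢
    omega
  · intro y hy
    simp only [Finset.mem_Icc] at hy
    show ((y.toNat : ℤ)) = y
    omega
  · intro i hi
    show ((i:ℤ)).toNat = i
    omega
  · intro y hy
    simp only [Finset.mem_Icc] at hy
    show rho ν y = rho ν ((y.toNat : ℤ))
    congr 1
    omega

lemma light_windows (R : ℤ) (hR : 1 < R) (n : ℕ → ℕ) (hn : Tendsto n atTop atTop)
    (hA : Tendsto (fun k => ((n k : ℝ))⁻¹ * ∑ i ∈ Finset.Icc (1:ℕ) (n k), rho ν (i:ℤ))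
      atTop (nhds 0))
    (B₀ : ℤ) (hB₀ : R ≤ B₀) (ε : ℝ) (hε : 0 < ε) :
    ∃ N : ℕ, 1 ≤ N ∧
      ∑ b ∈ Finset.Icc (B₀+1) (B₀+(N:ℤ)), (∑ y ∈ Finset.Icc (b-R+1) (b+R), rho ν y)
        < ε * N := by
  have hRR : (0:ℝ) < (R:ℝ) := by exact_mod_cast (by omega : (0:ℤ) < R)
  have hε4 : (0:ℝ) < ε / (4*R) := by positivity
  have h1 : ∀ᶠ k in atTop,
      ((n k : ℝ))⁻¹ * ∑ i ∈ Finset.Icc (1:ℕ) (n k), rho ν (i:ℤ) < ε / (4*R) :=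
    hA.eventually (gt_mem_nhds hε4)
  have h2 : ∀ᶠ k in atTop, 2*(B₀ + R).toNat + 2 ≤ n k := hn.eventually_ge_atTop _
  obtain ⟨k, hk1, hk2⟩ := (h1.and h2).exists
  set M := n k with hM
  set N := M - (B₀ + R).toNat with hN
  have hBR : (0:ℤ) ≤ B₀ + R := by omega
  have hNM : (B₀ + (N:ℤ) + R) = (M:ℤ) := by omega
  have hM2N : (M:ℤ) ≤ 2 * N := by omega
  refine ⟨N, by omega, ?_⟩
  set Y : Finset ℤ := Finset.Icc (1:ℤ) (M:ℤ) with hY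
  set T : Finset ℤ := Finset.Icc (B₀+1) (B₀+(N:ℤ)) with hT
  have hsub : ∀ b ∈ T, Finset.Icc (b-R+1) (b+R) ⊆ Y := by
    intro b hb y hy
    simp only [hT, Finset.mem_Icc] at hb
    simp only [Finset.mem_Icc] at hy
    simp only [hY, Finset.mem_Icc]
    omega
  have step1 : ∀ b ∈ T, ∑ y ∈ Finset.Icc (b-R+1) (b+R), rho ν y
      = ∑ y ∈ Y, if y ∈ Finset.Icc (b-R+1) (b+R) then rho ν y else 0 := by
    intro b hb
    rw [Finset.sum_ite_mem, Finset.inter_eq_right.mpr (hsub b hb)]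
  rw [Finset.sum_congr rfl step1, Finset.sum_comm]
  have step2 : ∀ y ∈ Y, (∑ b ∈ T, if y ∈ Finset.Icc (b-R+1) (b+R) then rho ν y else 0)
      ≤ (2*R : ℝ) * rho ν y := by
    intro y hy
    have e1 : ∀ b ∈ T, (if y ∈ Finset.Icc (b-R+1) (b+R) then rho ν y else 0)
        = (if b ∈ Finset.Icc (y-R) (y+R-1) then rho ν y else 0) := by
      intro b hb
      refine if_congr ?_ rfl rfl
      simp only [Finset.mem_Icc]
      omega
    rw [Finset.sum_congr rfl e1, Finset.sum_ite_mem, Finset.sum_const, nsmul_eq_mul]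
    have hcard : ((T ∩ Finset.Icc (y-R) (y+R-1)).card : ℝ) ≤ (2*R : ℝ) := by
      have h3 : (T ∩ Finset.Icc (y-R) (y+R-1)).card ≤ (Finset.Icc (y-R) (y+R-1)).card :=
        Finset.card_le_card Finset.inter_subset_right
      have h4 : ((Finset.Icc (y-R) (y+R-1)).card : ℤ) ≤ 2*R := by
        rw [Int.card_Icc]; omega
      have h5 : ((T ∩ Finset.Icc (y-R) (y+R-1)).card : ℤ) ≤ 2*R :=
        le_trans (by exact_mod_cast h3) h4
      exact_mod_cast h5
    exact mul_le_mul_of_nonneg_right hcard (rho_nonneg ν y)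
  have step3 : ∑ y ∈ Y, (∑ b ∈ T, if y ∈ Finset.Icc (b-R+1) (b+R) then rho ν y else 0)
      ≤ (2*R:ℝ) * ∑ y ∈ Y, rho ν y := by
    rw [Finset.mul_sum]
    exact Finset.sum_le_sum step2
  have hS0 : (0:ℝ) ≤ ∑ y ∈ Y, rho ν y := Finset.sum_nonneg fun y _ => rho_nonneg ν y
  have hScast : ∑ y ∈ Y, rho ν y = ∑ i ∈ Finset.Icc (1:ℕ) M, rho ν (i:ℤ) := sum_cast_rho ν M
  have hMpos : (0:ℝ) < (M:ℝ) := by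
    have : (0:ℕ) < M := by omega
    exact_mod_cast this
  have hSlt : ∑ y ∈ Y, rho ν y < (M:ℝ) * (ε / (4*R)) := by
    rw [hScast]
    have this := hk1
    calc ∑ i ∈ Finset.Icc (1:ℕ) M, rho ν (i:ℤ)
        = (M:ℝ) * ((M:ℝ)⁻¹ * ∑ i ∈ Finset.Icc (1:ℕ) M, rho ν (i:ℤ)) := by
          field_simp
      _ < (M:ℝ) * (ε / (4*R)) := by
          exact mul_lt_mul_of_pos_left this hMpos
  calc ∑ y ∈ Y, (∑ b ∈ T, if y ∈ Finset.Icc (b-R+1) (b+R) then rho ν y else 0)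
      ≤ (2*R:ℝ) * ∑ y ∈ Y, rho ν y := step3
    _ < (2*R:ℝ) * ((M:ℝ) * (ε / (4*R))) := by
        exact mul_lt_mul_of_pos_left hSlt (by positivity)
    _ = (M:ℝ) * ε / 2 := by field_simp; ring
    _ ≤ ε * N := by
        have hcast : (M:ℝ) ≤ 2 * (N:ℝ) := by exact_mod_cast hM2N
        nlinarith
end ces

lemma window_ineq (p : ℤ → ℝ) (R : ℤ) (hR : 1 < R) (hp : ∀ k, 0 ≤ p k)
    (hrange : ∀ k : ℤ, R < |k| → p k = 0) (hasym : ∀ k : ℤ, 1 ≤ k → p (-k) ≤ p k)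
    (ν : Measure Config) [IsProbabilityMeasure ν]
    (hbond : ∀ m : ℤ, 0 ≤ m → ∫ η, current p m (m+1) η ∂ν = 0)
    (k₀ : ℤ) (hk₀1 : 1 ≤ k₀) (hk₀R : k₀ ≤ R)
    (x : ℤ) (hx : R + 1 ≤ x) (b : ℤ) (hb : x + k₀ ≤ b) :
    (p k₀ - p (-k₀)) * EE ν x (x+k₀)
      ≤ (∑ k ∈ Finset.Icc (1:ℤ) R, p (-k)) * R *
        ∑ y ∈ Finset.Icc (b-R+1) (b+R), rho ν y := by
  have hR0 : (0:ℤ) < R := by omega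
  set I1 : Finset ℤ := Finset.Icc (x+1-R) b with hI1
  set I2 : Finset ℤ := Finset.Icc (x+1) (b+R) with hI2
  set U : Finset (ℤ × ℤ) := I1 ×ˢ I2 with hU
  set c : ℤ × ℤ → ℕ :=
    fun q => ((Finset.Icc x b).filter (fun m => q.1 ≤ m ∧ m+1 ≤ q.2)).card with hc
  set t : ℤ × ℤ → ℝ :=
    fun q => p (q.2-q.1) * EE ν q.1 q.2 - p (q.1-q.2) * EE ν q.2 q.1 with ht
  set W : ℝ := ∑ y ∈ Finset.Icc (b-R+1) (b+R), rho ν y with hW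
  -- vanishing of c
  have hczero : ∀ q : ℤ × ℤ, ¬ (q.1 + 1 ≤ q.2) → c q = 0 := by
    intro q hq
    refine Finset.card_eq_zero.mpr (Finset.filter_eq_empty_iff.mpr ?_)
    intro m _
    omega
  have hczero2 : ∀ q : ℤ × ℤ, q.2 ≤ x → c q = 0 := by
    intro q hq
    refine Finset.card_eq_zero.mpr (Finset.filter_eq_empty_iff.mpr ?_)
    intro m hm
    simp only [Finset.mem_Icc] at hm
    omega
  have hczero3 : ∀ q : ℤ × ℤ, b + 1 ≤ q.1 → c q = 0 := by
    intro q hq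
    refine Finset.card_eq_zero.mpr (Finset.filter_eq_empty_iff.mpr ?_)
    intro m hm
    simp only [Finset.mem_Icc] at hm
    omega
  -- Step A : the weighted sum of currents vanishes
  have h0 : ∑ q ∈ U, (c q : ℝ) * t q = 0 := by
    have hJ : ∀ m ∈ Finset.Icc x b, ∫ η, current p m (m+1) η ∂ν
        = ∑ q ∈ U, (if q.1 ≤ m ∧ m+1 ≤ q.2 then t q else 0) := by
      intro m hm
      simp only [Finset.mem_Icc] at hm
      rw [integral_current p R hR0 hrange ν m (m+1) U ?_]
      · refine Finset.sum_congr rfl fun q hq => ?_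
        simp only [hU, hI1, hI2, Finset.mem_product, Finset.mem_Icc] at hq
        refine if_congr ?_ rfl rfl
        constructor
        · rintro ⟨h1, h2, _, _⟩; exact ⟨h1, h2⟩
        · rintro ⟨h1, h2⟩; refine ⟨h1, h2, by omega, by omega⟩
      · intro q h1 h2 h3 h4
        simp only [hU, hI1, hI2, Finset.mem_product, Finset.mem_Icc]
        omega
    have hz : ∑ m ∈ Finset.Icc x b, ∫ η, current p m (m+1) η ∂ν = 0 := by
      refine Finset.sum_eq_zero fun m hm => ?_
      simp only [Finset.mem_Icc] at hm
      exact hbond m (by omega)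
    calc ∑ q ∈ U, (c q : ℝ) * t q
        = ∑ q ∈ U, ∑ m ∈ Finset.Icc x b, (if q.1 ≤ m ∧ m+1 ≤ q.2 then t q else 0) := by
          refine Finset.sum_congr rfl fun q hq => ?_
          rw [← Finset.sum_filter, Finset.sum_const, nsmul_eq_mul]
      _ = ∑ m ∈ Finset.Icc x b, ∑ q ∈ U, (if q.1 ≤ m ∧ m+1 ≤ q.2 then t q else 0) :=
          Finset.sum_comm
      _ = ∑ m ∈ Finset.Icc x b, ∫ η, current p m (m+1) η ∂ν :=
          (Finset.sum_congr rfl fun m hm => (hJ m hm).symm)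
      _ = 0 := hz
  -- Step B : decompose t
  set f1 : ℤ × ℤ → ℝ :=
    fun q => (c q : ℝ) * ((p (q.2-q.1) - p (q.1-q.2)) * EE ν q.1 q.2) with hf1
  set g : ℤ × ℤ → ℝ :=
    fun q => (c q : ℝ) * (p (q.1-q.2) * (rho ν q.2 - rho ν q.1)) with hg
  have hdecomp : ∀ q : ℤ × ℤ, (c q : ℝ) * t q = f1 q - g q := by
    intro q
    simp only [ht, hf1, hg]
    rw [show rho ν q.2 - rho ν q.1 = -(rho ν q.1 - rho ν q.2) by ring,
      ← EE_sub_EE ν q.1 q.2]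
    ring
  have h0' : ∑ q ∈ U, f1 q = ∑ q ∈ U, g q := by
    have : ∑ q ∈ U, (f1 q - g q) = 0 := by
      rw [← Finset.sum_congr rfl fun q _ => hdecomp q]
      exact h0
    rw [Finset.sum_sub_distrib] at this
    linarith
  -- Step C : extraction of the (x, x+k₀) term
  have hqmem : ((x, x+k₀) : ℤ × ℤ) ∈ U := by
    simp only [hU, hI1, hI2, Finset.mem_product, Finset.mem_Icc]
    omega
  have hf1nonneg : ∀ q ∈ U, 0 ≤ f1 q := by
    intro q _
    by_cases hcq : q.1 + 1 ≤ q.2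
    · refine mul_nonneg (Nat.cast_nonneg _) (mul_nonneg (sub_nonneg.mpr ?_) (EE_nonneg ν _ _))
      have := hasym (q.2 - q.1) (by omega)
      rw [show q.1 - q.2 = -(q.2 - q.1) by ring]
      exact this
    · simp [hf1, hczero q hcq]
  have hext : (p k₀ - p (-k₀)) * EE ν x (x+k₀) ≤ ∑ q ∈ U, f1 q := by
    have hle : f1 (x, x+k₀) ≤ ∑ q ∈ U, f1 q :=
      Finset.single_le_sum hf1nonneg hqmem
    have hc1 : (1:ℝ) ≤ (c (x, x+k₀) : ℝ) := by
      have : 0 < c (x, x+k₀) := by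
        refine Finset.card_pos.mpr ⟨x, ?_⟩
        simp only [Finset.mem_filter, Finset.mem_Icc]
        omega
      exact_mod_cast this
    have e : f1 (x, x+k₀) = (c (x, x+k₀) : ℝ) * ((p k₀ - p (-k₀)) * EE ν x (x+k₀)) := by
      simp only [hf1]
      rw [show x + k₀ - x = k₀ by ring, show x - (x+k₀) = -k₀ by ring]
    have hnn : 0 ≤ (p k₀ - p (-k₀)) * EE ν x (x+k₀) :=
      mul_nonneg (sub_nonneg.mpr (hasym k₀ hk₀1)) (EE_nonneg ν _ _)
    calc (p k₀ - p (-k₀)) * EE ν x (x+k₀)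
        ≤ (c (x, x+k₀) : ℝ) * ((p k₀ - p (-k₀)) * EE ν x (x+k₀)) :=
          le_mul_of_one_le_left hnn hc1
      _ = f1 (x, x+k₀) := e.symm
      _ ≤ ∑ q ∈ U, f1 q := hle
  rw [h0'] at hext
  -- Step D : bound ∑ g
  have hDfin : ∑ q ∈ U, g q ≤ (∑ k ∈ Finset.Icc (1:ℤ) R, p (-k)) * R * W := by
    rw [hU, Finset.sum_product]
    -- inner sum transformation
    have hinner : ∀ u ∈ I1, ∑ v ∈ I2, g (u, v) = ∑ k ∈ Finset.Icc (1:ℤ) R, g (u, u+k) := by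
      intro u hu
      simp only [hI1, Finset.mem_Icc] at hu
      have claim1 : ∀ v : ℤ, v ∉ Finset.Icc (u+1) (u+R) → g (u, v) = 0 := by
        intro v hv
        simp only [Finset.mem_Icc, not_and_or, not_le] at hv
        rcases hv with hv | hv
        · have : c (u, v) = 0 := hczero (u, v) (by simp; omega)
          simp [hg, this]
        · have : p (u - v) = 0 := hrange _ (by rw [abs_of_nonpos (by omega)]; omega)
          simp [hg, this]
      have claim2 : ∀ v : ℤ, v ∈ Finset.Icc (u+1) (u+R) → v ∉ I2 → g (u, v) = 0 := by
        intro v hv hnv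
        simp only [Finset.mem_Icc] at hv
        simp only [hI2, Finset.mem_Icc, not_and_or, not_le] at hnv
        rcases hnv with hnv | hnv
        · have : c (u, v) = 0 := hczero2 (u, v) (by simp; omega)
          simp [hg, this]
        · omega
      have e1 : ∑ v ∈ I2, g (u, v) = ∑ v ∈ I2 ∪ Finset.Icc (u+1) (u+R), g (u, v) :=
        Finset.sum_subset Finset.subset_union_left
          (fun v hv hnv => claim2 v (by
            rcases Finset.mem_union.mp hv with h | h
            · exact absurd h hnv
            · exact h) hnv)
      have e2 : ∑ v ∈ Finset.Icc (u+1) (u+R), g (u, v)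
          = ∑ v ∈ I2 ∪ Finset.Icc (u+1) (u+R), g (u, v) :=
        Finset.sum_subset Finset.subset_union_right
          (fun v hv hnv => claim1 v hnv)
      rw [e1, ← e2]
      rw [show Finset.Icc (u+1) (u+R) = Finset.map (addLeftEmbedding u) (Finset.Icc 1 R) from
        (Finset.map_add_left_Icc 1 R u).symm, Finset.sum_map]
      refine Finset.sum_congr rfl fun k hk => ?_
      congr 1
    rw [Finset.sum_congr rfl hinner, Finset.sum_comm]
    -- per-k bound
    have hperk : ∀ k ∈ Finset.Icc (1:ℤ) R, ∑ u ∈ I1, g (u, u+k) ≤ p (-k) * (R * W) := by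
      intro k hk
      simp only [Finset.mem_Icc] at hk
      set n : ℤ → ℝ := fun u => (c (u, u+k) : ℝ) with hn
      have egk : ∀ u : ℤ, g (u, u+k) = p (-k) * (n u * (rho ν (u+k) - rho ν u)) := by
        intro u
        simp only [hg, hn]
        rw [show u - (u+k) = -k by ring]
        ring
      rw [Finset.sum_congr rfl fun u _ => egk u, ← Finset.mul_sum]
      refine mul_le_mul_of_nonneg_left ?_ (hp (-k))
      -- telescoping bound : ∑_{u ∈ I1} n u * (rho(u+k) - rho u) ≤ R * W
      set I : Finset ℤ := Finset.Icc (x+1-R) (b+k) with hI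
      have esplit : ∑ u ∈ I1, n u * (rho ν (u+k) - rho ν u)
          = ∑ u ∈ I1, n u * rho ν (u+k) - ∑ u ∈ I1, n u * rho ν u := by
        rw [← Finset.sum_sub_distrib]
        exact Finset.sum_congr rfl fun u _ => by ring
      -- first sum reindex and extension
      have efirst : ∑ u ∈ I1, n u * rho ν (u+k) = ∑ y ∈ I, n (y-k) * rho ν y := by
        have r1 : ∑ u ∈ I1, n u * rho ν (u+k)
            = ∑ y ∈ Finset.Icc (k+(x+1-R)) (k+b), n (y-k) * rho ν y := by
          rw [show Finset.Icc (k+(x+1-R)) (k+b)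
              = Finset.map (addLeftEmbedding k) (Finset.Icc (x+1-R) b) from
            (Finset.map_add_left_Icc (x+1-R) b k).symm, Finset.sum_map]
          refine Finset.sum_congr rfl fun u hu => ?_
          simp only [addLeftEmbedding_apply]
          rw [show k + u - k = u by ring, show k + u = u + k by ring]
        rw [r1]
        refine Finset.sum_subset ?_ ?_
        · intro y hy
          simp only [Finset.mem_Icc] at hy ⊢
          simp only [hI, Finset.mem_Icc]
          omega
        · intro y hyI hy
          simp only [hI, Finset.mem_Icc] at hyI
          simp only [Finset.mem_Icc, not_and_or, not_le] at hy
          have : c (y-k, y-k+k) = 0 := by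
            refine hczero2 (y-k, y-k+k) ?_
            simp only
            omega
          simp only [hn, this, Nat.cast_zero, zero_mul]
      have esecond : ∑ u ∈ I1, n u * rho ν u = ∑ y ∈ I, n y * rho ν y := by
        refine Finset.sum_subset ?_ ?_
        · intro y hy
          simp only [hI1, Finset.mem_Icc] at hy
          simp only [hI, Finset.mem_Icc]
          omega
        · intro y hyI hy
          simp only [hI1, Finset.mem_Icc] at hy
          simp only [hI, Finset.mem_Icc] at hyI
          have : c (y, y+k) = 0 := hczero3 (y, y+k) (by simp only; omega)
          simp only [hn, this, Nat.cast_zero, zero_mul]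
      rw [esplit, efirst, esecond, ← Finset.sum_sub_distrib]
      have emerge : ∀ y ∈ I, n (y-k) * rho ν y - n y * rho ν y
          = (n (y-k) - n y) * rho ν y := fun y _ => by ring
      rw [Finset.sum_congr rfl emerge]
      -- termwise bound
      have hterm : ∀ y ∈ I, (n (y-k) - n y) * rho ν y
          ≤ (if y ∈ Finset.Icc (b-R+1) (b+R) then (R:ℝ) * rho ν y else 0) := by
        intro y hyI
        simp only [hI, Finset.mem_Icc] at hyI
        by_cases hyw : y ∈ Finset.Icc (b-R+1) (b+R)
        · rw [if_pos hyw]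
          have hnbd : n (y-k) ≤ (R:ℝ) := by
            have hsub : ((Finset.Icc x b).filter
                (fun m => (y-k, y-k+k).1 ≤ m ∧ m+1 ≤ (y-k, y-k+k).2))
                ⊆ Finset.Icc (y-k) (y-1) := by
              intro m hm
              simp only [Finset.mem_filter, Finset.mem_Icc] at hm ⊢
              omega
            have hcard : c (y-k, y-k+k) ≤ (Finset.Icc (y-k) (y-1)).card :=
              Finset.card_le_card hsub
            have hcard2 : ((Finset.Icc (y-k) (y-1)).card : ℤ) = k := by
              rw [Int.card_Icc]; omega
            have : ((c (y-k, y-k+k) : ℤ)) ≤ k :=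
              le_trans (by exact_mod_cast hcard) (le_of_eq hcard2)
            have hkR : ((c (y-k, y-k+k) : ℤ)) ≤ R := by omega
            simp only [hn]
            exact_mod_cast hkR
          have hn0 : (0:ℝ) ≤ n y := Nat.cast_nonneg _
          refine mul_le_mul_of_nonneg_right (by linarith) (rho_nonneg ν y)
        · rw [if_neg hyw]
          simp only [Finset.mem_Icc, not_and_or, not_le] at hyw
          have hyb : y ≤ b - R := by omega
          have hmono : n (y-k) ≤ n y := by
            simp only [hn]
            have hcc : c (y-k, y-k+k) ≤ c (y, y+k) := by
              refine Finset.card_le_card_of_injOn (fun m => m + k) ?_ ?_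
              · intro m hm
                simp only [Finset.mem_coe, Finset.mem_filter, Finset.mem_Icc] at hm ⊢
                omega
              · intro m1 _ m2 _ h
                have h' : m1 + k = m2 + k := h
                omega
            exact_mod_cast hcc
          exact mul_nonpos_of_nonpos_of_nonneg (by linarith) (rho_nonneg ν y)
      calc ∑ y ∈ I, (n (y-k) - n y) * rho ν y
          ≤ ∑ y ∈ I, (if y ∈ Finset.Icc (b-R+1) (b+R) then (R:ℝ) * rho ν y else 0) :=
            Finset.sum_le_sum hterm
        _ = ∑ y ∈ I ∩ Finset.Icc (b-R+1) (b+R), (R:ℝ) * rho ν y := Finset.sum_ite_mem _ _ _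
        _ ≤ ∑ y ∈ Finset.Icc (b-R+1) (b+R), (R:ℝ) * rho ν y := by
            refine Finset.sum_le_sum_of_subset_of_nonneg Finset.inter_subset_right ?_
            intro y _ _
            exact mul_nonneg (by exact_mod_cast le_of_lt (by omega : (0:ℤ) < R))
              (rho_nonneg ν y)
        _ = (R:ℝ) * W := by rw [hW, Finset.mul_sum]
    calc ∑ k ∈ Finset.Icc (1:ℤ) R, ∑ u ∈ I1, g (u, u+k)
        ≤ ∑ k ∈ Finset.Icc (1:ℤ) R, p (-k) * (R * W) := Finset.sum_le_sum hperk
      _ = (∑ k ∈ Finset.Icc (1:ℤ) R, p (-k)) * R * W := by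
          rw [← Finset.sum_mul]
          ring
  calc (p k₀ - p (-k₀)) * EE ν x (x+k₀) ≤ ∑ q ∈ U, g q := hext
    _ ≤ _ := hDfin

section final
variable (p : ℤ → ℝ) (R : ℤ) (ν : Measure Config) [IsProbabilityMeasure ν] (n : ℕ → ℕ)

lemma rho_mono (hR : 1 < R) (hp : ∀ k, 0 ≤ p k)
    (hrange : ∀ k : ℤ, R < |k| → p k = 0) (hasym : ∀ k : ℤ, 1 ≤ k → p (-k) ≤ p k)
    (hbond : ∀ m : ℤ, 0 ≤ m → ∫ η, current p m (m+1) η ∂ν = 0)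
    (k₀ : ℤ) (hk₀1 : 1 ≤ k₀) (hk₀R : k₀ ≤ R) (hk₀ : p (-k₀) < p k₀)
    (hn : Tendsto n atTop atTop)
    (hA : Tendsto (fun k => ((n k : ℝ))⁻¹ * ∑ i ∈ Finset.Icc (1:ℕ) (n k), rho ν (i:ℤ))
      atTop (nhds 0))
    (x : ℤ) (hx : R + 1 ≤ x) : rho ν x ≤ rho ν (x + k₀) := by
  have hEE : EE ν x (x+k₀) = 0 := by
    refine le_antisymm ?_ (EE_nonneg ν _ _)
    by_contra hpos
    push_neg at hpos
    set c₀ : ℝ := p k₀ - p (-k₀) with hc₀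
    have hc₀pos : 0 < c₀ := by simp only [hc₀]; linarith
    set CR : ℝ := (∑ k ∈ Finset.Icc (1:ℤ) R, p (-k)) * R with hCR
    have hCRnn : 0 ≤ CR := by
      refine mul_nonneg (Finset.sum_nonneg fun k _ => hp _) ?_
      exact_mod_cast le_of_lt (by omega : (0:ℤ) < R)
    set E : ℝ := EE ν x (x+k₀) with hE
    have hEpos : 0 < E := hpos
    set ε : ℝ := c₀ * E / (CR + 1) with hε
    have hεpos : 0 < ε := by positivity
    obtain ⟨N, hN1, hNlt⟩ := light_windows ν R hR n hn hA (x + k₀) (by omega) ε hεpos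
    set B₀ : ℤ := x + k₀ with hB₀
    have hper : ∀ b ∈ Finset.Icc (B₀+1) (B₀+(N:ℤ)), c₀ * E
        ≤ CR * ∑ y ∈ Finset.Icc (b-R+1) (b+R), rho ν y := by
      intro b hb
      simp only [Finset.mem_Icc] at hb
      exact window_ineq p R hR hp hrange hasym ν hbond k₀ hk₀1 hk₀R x hx b (by omega)
    have hsum : (N:ℝ) * (c₀ * E)
        ≤ CR * ∑ b ∈ Finset.Icc (B₀+1) (B₀+(N:ℤ)),
            (∑ y ∈ Finset.Icc (b-R+1) (b+R), rho ν y) := by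
      rw [Finset.mul_sum]
      calc (N:ℝ) * (c₀ * E)
          = ∑ _b ∈ Finset.Icc (B₀+1) (B₀+(N:ℤ)), (c₀ * E) := by
            rw [Finset.sum_const, nsmul_eq_mul, Int.card_Icc]
            congr 2
            omega
        _ ≤ _ := Finset.sum_le_sum hper
    have hWnn : 0 ≤ ∑ b ∈ Finset.Icc (B₀+1) (B₀+(N:ℤ)),
        (∑ y ∈ Finset.Icc (b-R+1) (b+R), rho ν y) :=
      Finset.sum_nonneg fun b _ => Finset.sum_nonneg fun y _ => rho_nonneg ν y
    have hNpos : (0:ℝ) < N := by exact_mod_cast hN1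
    have h1 : (N:ℝ) * (c₀ * E) ≤ CR * (ε * N) :=
      le_trans hsum (mul_le_mul_of_nonneg_left (le_of_lt hNlt) hCRnn)
    have hCElt : CR * ε < c₀ * E := by
      have hd : CR / (CR + 1) < 1 := by
        rw [div_lt_one (by linarith)]
        linarith
      calc CR * ε = (CR / (CR + 1)) * (c₀ * E) := by
            rw [hε]; ring
        _ < 1 * (c₀ * E) := mul_lt_mul_of_pos_right hd (by positivity)
        _ = c₀ * E := one_mul _
    nlinarith
  have := rho_sub_le_EE ν x (x+k₀)
  rw [hEE] at this
  linarith

lemma rho_far (hR : 1 < R) (hp : ∀ k, 0 ≤ p k)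
    (hrange : ∀ k : ℤ, R < |k| → p k = 0) (hasym : ∀ k : ℤ, 1 ≤ k → p (-k) ≤ p k)
    (hbond : ∀ m : ℤ, 0 ≤ m → ∫ η, current p m (m+1) η ∂ν = 0)
    (k₀ : ℤ) (hk₀1 : 1 ≤ k₀) (hk₀R : k₀ ≤ R) (hk₀ : p (-k₀) < p k₀)
    (hn : Tendsto n atTop atTop)
    (hA : Tendsto (fun k => ((n k : ℝ))⁻¹ * ∑ i ∈ Finset.Icc (1:ℕ) (n k), rho ν (i:ℤ))
      atTop (nhds 0))
    (x : ℤ) (hx : R + 1 ≤ x) : rho ν x = 0 := by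
  by_contra h
  have hxpos : 0 < rho ν x := lt_of_le_of_ne (rho_nonneg ν x) (Ne.symm h)
  set ε : ℝ := rho ν x with hεd
  have hprog : ∀ j : ℕ, ε ≤ rho ν (x + (j:ℤ)*k₀) := by
    intro j
    induction j with
    | zero => simp [hεd]
    | succ j ih =>
      have hmono := rho_mono p R ν n hR hp hrange hasym hbond k₀ hk₀1 hk₀R hk₀ hn hA
        (x + (j:ℤ)*k₀) (by nlinarith [Int.ofNat_nonneg j, hk₀1])
      have e : x + ((j:ℤ)+1)*k₀ = x + (j:ℤ)*k₀ + k₀ := by ring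
      push_cast
      rw [e]
      linarith
  have hwin : ∀ b : ℤ, x ≤ b → ε ≤ ∑ y ∈ Finset.Icc (b-R+1) (b+R), rho ν y := by
    intro b hb
    set d : ℤ := b - x with hd
    set q : ℤ := d / k₀ with hq
    set r : ℤ := d % k₀ with hr
    have hdm : k₀ * q + r = d := Int.mul_ediv_add_emod d k₀
    have hr0 : 0 ≤ r := Int.emod_nonneg d (by omega)
    have hrk : r < k₀ := Int.emod_lt_of_pos d (by omega)
    have hq0 : 0 ≤ q := Int.ediv_nonneg (by omega) (by omega)
    set y : ℤ := x + k₀ * q with hy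
    have hymem : y ∈ Finset.Icc (b-R+1) (b+R) := by
      simp only [Finset.mem_Icc, hy]
      omega
    have hrhoy : ε ≤ rho ν y := by
      have := hprog q.toNat
      rw [show ((q.toNat : ℤ)) = q by omega] at this
      rw [hy, show x + k₀ * q = x + q * k₀ by ring]
      exact this
    calc ε ≤ rho ν y := hrhoy
      _ ≤ ∑ y ∈ Finset.Icc (b-R+1) (b+R), rho ν y :=
        Finset.single_le_sum (fun z _ => rho_nonneg ν z) hymem
  set B₀ : ℤ := max x R with hB₀
  obtain ⟨N, hN1, hNlt⟩ := light_windows ν R hR n hn hA B₀ (le_max_right x R) ε hxpos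
  have hge : ε * N ≤ ∑ b ∈ Finset.Icc (B₀+1) (B₀+(N:ℤ)),
      (∑ y ∈ Finset.Icc (b-R+1) (b+R), rho ν y) := by
    calc ε * N = ∑ _b ∈ Finset.Icc (B₀+1) (B₀+(N:ℤ)), ε := by
          rw [Finset.sum_const, nsmul_eq_mul, Int.card_Icc]
          rw [mul_comm]
          congr 2
          omega
      _ ≤ _ := by
          refine Finset.sum_le_sum fun b hb => ?_
          simp only [Finset.mem_Icc] at hb
          exact hwin b (by omega)
  linarith

lemma rho_interior (hR : 1 < R) (hp : ∀ k, 0 ≤ p k)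
    (hrange : ∀ k : ℤ, R < |k| → p k = 0) (hasym : ∀ k : ℤ, 1 ≤ k → p (-k) ≤ p k)
    (hpR : 0 < p R)
    (hbond : ∀ m : ℤ, 0 ≤ m → ∫ η, current p m (m+1) η ∂ν = 0)
    (k₀ : ℤ) (hk₀1 : 1 ≤ k₀) (hk₀R : k₀ ≤ R) (hk₀ : p (-k₀) < p k₀)
    (hn : Tendsto n atTop atTop)
    (hA : Tendsto (fun k => ((n k : ℝ))⁻¹ * ∑ i ∈ Finset.Icc (1:ℕ) (n k), rho ν (i:ℤ))
      atTop (nhds 0))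
    (x : ℤ) (hx : 1 ≤ x) : rho ν x = 0 := by
  by_contra h
  have hxpos : 0 < rho ν x := lt_of_le_of_ne (rho_nonneg ν x) (Ne.symm h)
  have hfar := rho_far p R ν n hR hp hrange hasym hbond k₀ hk₀1 hk₀R hk₀ hn hA
  have hxR : x ≤ R := by
    by_contra hc
    exact h (hfar x (by omega))
  set T : Finset ℤ := (Finset.Icc 1 R).filter (fun z => rho ν z ≠ 0) with hT
  have hne : T.Nonempty := ⟨x, by simp only [hT, Finset.mem_filter, Finset.mem_Icc]; exact ⟨⟨hx, hxR⟩, h⟩⟩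
  set xs : ℤ := T.max' hne with hxs
  have hxsT : xs ∈ T := T.max'_mem hne
  simp only [hT, Finset.mem_filter, Finset.mem_Icc] at hxsT
  obtain ⟨⟨hxs1, hxsR⟩, hxs0⟩ := hxsT
  have hxspos : 0 < rho ν xs := lt_of_le_of_ne (rho_nonneg ν xs) (Ne.symm hxs0)
  have hzero : ∀ z : ℤ, xs + 1 ≤ z → rho ν z = 0 := by
    intro z hz
    rcases le_or_gt z R with hzR | hzR
    · by_contra hz0
      have hzT : z ∈ T := by
        simp only [hT, Finset.mem_filter, Finset.mem_Icc]
        exact ⟨⟨by omega, hzR⟩, hz0⟩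
      have := Finset.le_max' T z hzT
      omega
    · exact hfar z (by omega)
  -- the current across (xs, xs+1) is zero but bounded below by p R * rho xs
  have hcur0 := hbond xs (by omega)
  rw [integral_current p R (by omega) hrange ν xs (xs+1)
    (Finset.Icc (xs+1-R) xs ×ˢ Finset.Icc (xs+1) (xs+R))
    (fun q h1 h2 h3 h4 => by simp only [Finset.mem_product, Finset.mem_Icc]; omega)] at hcur0
  set S : Finset (ℤ × ℤ) := Finset.Icc (xs+1-R) xs ×ˢ Finset.Icc (xs+1) (xs+R) with hS
  have hsimp : ∀ q ∈ S, (if q.1 ≤ xs ∧ xs+1 ≤ q.2 ∧ q.1 ≠ 0 ∧ q.2 ≠ 0 then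
        p (q.2 - q.1) * EE ν q.1 q.2 - p (q.1 - q.2) * EE ν q.2 q.1 else 0)
      = (if q.1 ≤ xs ∧ xs+1 ≤ q.2 ∧ q.1 ≠ 0 ∧ q.2 ≠ 0 then
        p (q.2 - q.1) * EE ν q.1 q.2 else 0) := by
    intro q hq
    by_cases hcond : q.1 ≤ xs ∧ xs+1 ≤ q.2 ∧ q.1 ≠ 0 ∧ q.2 ≠ 0
    · rw [if_pos hcond, if_pos hcond]
      have hz : EE ν q.2 q.1 = 0 := by
        refine le_antisymm ?_ (EE_nonneg ν _ _)
        calc EE ν q.2 q.1 ≤ rho ν q.2 := EE_le_rho ν _ _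
          _ = 0 := hzero q.2 hcond.2.1
      rw [hz, mul_zero, sub_zero]
    · rw [if_neg hcond, if_neg hcond]
  rw [Finset.sum_congr rfl hsimp] at hcur0
  have hnn : ∀ q ∈ S, (0:ℝ) ≤ (if q.1 ≤ xs ∧ xs+1 ≤ q.2 ∧ q.1 ≠ 0 ∧ q.2 ≠ 0 then
      p (q.2 - q.1) * EE ν q.1 q.2 else 0) := by
    intro q _
    split_ifs
    · exact mul_nonneg (hp _) (EE_nonneg ν _ _)
    · exact le_refl 0
  have hsingle := Finset.single_le_sum hnn
    (show ((xs, xs+R) : ℤ × ℤ) ∈ S from by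
      simp only [hS, Finset.mem_product, Finset.mem_Icc]; omega)
  rw [hcur0] at hsingle
  have hval : (if ((xs, xs+R) : ℤ × ℤ).1 ≤ xs ∧ xs+1 ≤ ((xs, xs+R) : ℤ × ℤ).2 ∧
      ((xs, xs+R) : ℤ × ℤ).1 ≠ 0 ∧ ((xs, xs+R) : ℤ × ℤ).2 ≠ 0 then
        p (((xs, xs+R) : ℤ × ℤ).2 - ((xs, xs+R) : ℤ × ℤ).1) *
          EE ν ((xs, xs+R) : ℤ × ℤ).1 ((xs, xs+R) : ℤ × ℤ).2 else 0)
      = p R * EE ν xs (xs+R) := by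
    rw [if_pos (by refine ⟨le_refl _, by omega, by omega, by omega⟩)]
    rw [show xs + R - xs = R by ring]
  rw [hval] at hsingle
  have h5 : rho ν (xs+R) = 0 := hzero _ (by omega)
  have h6 : rho ν xs - rho ν (xs+R) ≤ EE ν xs (xs+R) := rho_sub_le_EE ν _ _
  rw [h5, sub_zero] at h6
  nlinarith
end final


/-- If an invariant measure of the blocked ASEP has zero mean current across
`(-1,1)` and some Cesàro weak limit of its translates has identically zero
one-site densities, then the invariant measure has zero density at every
positive site. -/
theorem zero_current_and_zero_cesaro_density_implies_zero_density
    (R : ℤ) (hR : 1 < R) (p : ℤ → ℝ) (hp : ∀ k, 0 ≤ p k)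
    (hrange : ∀ k : ℤ, R < |k| → p k = 0) (hpR : 0 < p R)
    (hasym : ∀ k : ℤ, 1 ≤ k → p (-k) ≤ p k)
    (hstrict : ∃ k : ℤ, 1 ≤ k ∧ p (-k) < p k)
    (ν νstar : Measure Config) (hν : IsProbabilityMeasure ν)
    (hνs : IsProbabilityMeasure νstar)
    (hinv : IsInvariantMeasure p ν)
    (hcur : ∫ η, current p (-1) 1 η ∂ν = 0)
    (hces : IsCesaroLimit ν νstar)
    (hdens : ∀ x : ℤ, ∫ η, val η x ∂νstar = 0) :
    ∀ x : ℤ, 0 < x → ∫ η, val η x ∂ν = 0 := by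
  obtain ⟨k₀, hk₀1, hk₀lt⟩ := hstrict
  have hk₀R : k₀ ≤ R := by
    by_contra hc
    push_neg at hc
    have hz : p k₀ = 0 := hrange k₀ (by rw [abs_of_pos (by omega)]; omega)
    have := hp (-k₀)
    rw [hz] at hk₀lt
    linarith
  have hbond := bond_zero p R ν (by omega) hrange hinv hcur
  obtain ⟨n, hn, hconv⟩ := hces
  have h1 := hconv (fun η => val η 0) (continuous_val 0)
  rw [hdens 0] at h1
  have hA : Tendsto (fun k => ((n k : ℝ))⁻¹ * ∑ i ∈ Finset.Icc (1:ℕ) (n k), rho ν (i:ℤ))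
      atTop (nhds 0) := by
    refine h1.congr fun k => ?_
    congr 1
    refine Finset.sum_congr rfl fun i _ => ?_
    show ∫ η, val η 0 ∂(translMeasure (i:ℤ) ν) = rho ν (i:ℤ)
    rw [integral_transl ν (i:ℤ) 0, zero_add]
  intro x hx
  exact rho_interior p R ν n hR hp hrange hasym hpR hbond k₀ hk₀1 hk₀R hk₀lt hn hA x (by omega)
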